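/- Let G=(V,E) be a weighted graph with boundary ∂=A⊔B⊔C, fix integers n≥2 and even m≥2, and let q:V→P_{2n} satisfy q≡q_A on A and q≡q_B on B. Then for every path L∈𝒫_{A,B}: Σ_{e={x,y}∈L} d(q(x),q(y)) ≥ 2(n−δ_{b_L,(1,…,1)}), where b_L is the bitwise AND over the vertices v of L of the bit strings b(q(v)); moreover Σ_{e={x,y}∈L} d(q(x),q(y)) is an even integer. -/

import Mathlib

open scoped Classical

noncomputable section

namespace RTN

/-! ## Set partitions -/

/-- Number of blocks of a set partition (as an integer). -/
def nb {α : Type*} (p : Setoid α) : ℤ := Nat.card (Quotient p)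

/-- The partition distance `d(p,q) = #(p) + #(q) - 2 #(p ⊔ q)`. -/
def pdist {α : Type*} (p q : Setoid α) : ℤ := nb p + nb q - 2 * nb (p ⊔ q)

lemma pdist_comm {α : Type*} (p q : Setoid α) : pdist p q = pdist q p := by
  unfold pdist
  rw [sup_comm p q]
  ring

/-- `k` is a singlet (block of size one) of the partition `p`. -/
def IsSinglet {α : Type*} (p : Setoid α) (k : α) : Prop := ∀ y, p.r k y → y = k

/-- The number of singlets `#₁(p)` of a partition. -/
def nS {α : Type*} (p : Setoid α) : ℤ := Nat.card {k : α // IsSinglet p k}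

/-- The singlet distance `d₁(s₁,s₂) = #₁(s₁) + #₁(s₂) - 2 #₁(s₁ ⊔ s₂)`. -/
def sdist {α : Type*} (s₁ s₂ : Setoid α) : ℤ := nS s₁ + nS s₂ - 2 * nS (s₁ ⊔ s₂)

/-- The singlet pattern `s(p)`: the coarsest partition whose singlets are exactly
those of `p` (all non-singlet elements lie in one block). -/
def spat {α : Type*} (p : Setoid α) : Setoid α where
  r x y := x = y ∨ (¬ IsSinglet p x ∧ ¬ IsSinglet p y)
  iseqv := by
    refine ⟨fun x => Or.inl rfl, ?_, ?_⟩
    · intro x y h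
      rcases h with rfl | ⟨hx, hy⟩
      · exact Or.inl rfl
      · exact Or.inr ⟨hy, hx⟩
    · intro x y z h1 h2
      rcases h1 with rfl | ⟨hx, hy⟩
      · exact h2
      · rcases h2 with rfl | ⟨_, hz⟩
        · exact Or.inr ⟨hx, hy⟩
        · exact Or.inr ⟨hx, hz⟩

/-- The bit `b^k(p)`: `0` if `p` has a singlet at `k`, else `1`. -/
def bbit {α : Type*} (p : Setoid α) (k : α) : ℤ := if IsSinglet p k then 0 else 1

/-- The size of the block of `p` containing `x`. -/
def blockSize {α : Type*} (p : Setoid α) (x : α) : ℕ := Nat.card {y : α // p.r x y}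

noncomputable instance {α : Type*} [Finite α] (s : Setoid α) : Fintype (Quotient s) :=
  Fintype.ofFinite _

/-! ## Permutations -/

/-- The partition of `α` into orbits (cycles) of a permutation. -/
def orbitSetoid {α : Type*} (g : Equiv.Perm α) : Setoid α where
  r x y := ∃ k : ℤ, (g ^ k) x = y
  iseqv := by
    refine ⟨fun x => ⟨0, by simp⟩, ?_, ?_⟩
    · rintro x y ⟨k, rfl⟩
      exact ⟨-k, by simp [← Equiv.Perm.mul_apply, ← zpow_add]⟩
    · rintro x y z ⟨k, rfl⟩ ⟨l, rfl⟩
      exact ⟨l + k, by rw [zpow_add, Equiv.Perm.mul_apply]⟩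

/-- The number of cycles `#(g)` of a permutation (fixed points included). -/
def ncyc {α : Type*} (g : Equiv.Perm α) : ℤ := nb (orbitSetoid g)

/-- The Cayley distance `d(g,h) = N - #(g h⁻¹)`. -/
def cayley {α : Type*} [Fintype α] (g h : Equiv.Perm α) : ℤ :=
  (Fintype.card α : ℤ) - ncyc (g * h⁻¹)

lemma orbitSetoid_inv {α : Type*} (g : Equiv.Perm α) : orbitSetoid g⁻¹ = orbitSetoid g := by
  apply Setoid.ext
  intro x y
  constructor
  · rintro ⟨k, hk⟩
    exact ⟨-k, by rw [← inv_zpow']; exact hk⟩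
  · rintro ⟨k, hk⟩
    exact ⟨-k, by rw [inv_zpow', neg_neg]; exact hk⟩

lemma cayley_comm {α : Type*} [Fintype α] (g h : Equiv.Perm α) : cayley g h = cayley h g := by
  unfold cayley ncyc
  rw [show h * g⁻¹ = (g * h⁻¹)⁻¹ by rw [mul_inv_rev, inv_inv], orbitSetoid_inv]

/-- Coarse graining of a partition `p` by the blocks of `P(g₀)`: the partition of the set
of blocks of `P(g₀)` induced by `p ⊔ P(g₀)`. -/
def coarse {α : Type*} (g₀ : Equiv.Perm α) (p : Setoid α) :
    Setoid (Quotient (orbitSetoid g₀)) where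
  r u v := ∃ x y : α, Quotient.mk (orbitSetoid g₀) x = u ∧ Quotient.mk (orbitSetoid g₀) y = v ∧
    (p ⊔ orbitSetoid g₀).r x y
  iseqv := by
    refine ⟨?_, ?_, ?_⟩
    · intro u
      obtain ⟨x, rfl⟩ := Quotient.exists_rep u
      exact ⟨x, x, rfl, rfl, (p ⊔ orbitSetoid g₀).iseqv.refl x⟩
    · rintro u v ⟨x, y, hx, hy, hxy⟩
      exact ⟨y, x, hy, hx, (p ⊔ orbitSetoid g₀).iseqv.symm hxy⟩
    · rintro u v w ⟨x, y, hx, hy, hxy⟩ ⟨y', z, hy', hz, hyz⟩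
      refine ⟨x, z, hx, hz, ?_⟩
      have h1 : (orbitSetoid g₀).r y y' := Quotient.exact (hy.trans hy'.symm)
      have h2 : (p ⊔ orbitSetoid g₀).r y y' :=
        (le_sup_right : orbitSetoid g₀ ≤ p ⊔ orbitSetoid g₀) h1
      exact (p ⊔ orbitSetoid g₀).iseqv.trans hxy
        ((p ⊔ orbitSetoid g₀).iseqv.trans h2 hyz)

/-- The coarse graining `q_{g₀}(g) ∈ P_{#(g₀)}` of a permutation `g`. -/
def qc {α : Type*} (g₀ g : Equiv.Perm α) : Setoid (Quotient (orbitSetoid g₀)) :=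
  coarse g₀ (orbitSetoid g)

/-! ## Standard reflected-entropy boundary elements -/

/-- `g_B`, the product of `n` disjoint `m`-cycles `(k,ℓ) ↦ (k,ℓ+1)`. -/
def gB (n m : ℕ) : Equiv.Perm (Fin n × Fin m) :=
  Equiv.prodCongr (Equiv.refl (Fin n)) (finRotate m)

/-- `γ`, cyclically shifting `k ↦ k+1` on the elements with `ℓ` in the lower half,
fixing the rest. -/
def gamma (n m : ℕ) : Equiv.Perm (Fin n × Fin m) where
  toFun x := if m / 2 ≤ (x.2 : ℕ) then (finRotate n x.1, x.2) else x
  invFun x := if m / 2 ≤ (x.2 : ℕ) then ((finRotate n).symm x.1, x.2) else x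
  left_inv := by
    intro x
    by_cases h : m / 2 ≤ (x.2 : ℕ) <;> simp [h, -finRotate_apply, -finRotate_symm_apply]
  right_inv := by
    intro x
    by_cases h : m / 2 ≤ (x.2 : ℕ) <;> simp [h, -finRotate_apply, -finRotate_symm_apply]

/-- `g_A = γ⁻¹ g_B γ`. -/
def gA (n m : ℕ) : Equiv.Perm (Fin n × Fin m) :=
  (gamma n m)⁻¹ * gB n m * gamma n m

/-- For even `m`, `Fin m` splits into an upper and a lower half. -/
def halfEquiv (m : ℕ) (hm : m % 2 = 0) : Fin 2 × Fin (m / 2) ≃ Fin m :=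
  finProdFinEquiv.trans (finCongr (by omega))

/-- `X`, the product of the `2n` disjoint `(m/2)`-cycles cyclically permuting the
upper and the lower half of each block `k`. -/
def Xel (n m : ℕ) (hm : m % 2 = 0) : Equiv.Perm (Fin n × Fin m) :=
  Equiv.prodCongr (Equiv.refl (Fin n))
    ((halfEquiv m hm).permCongr
      (Equiv.prodCongr (Equiv.refl (Fin 2)) (finRotate (m / 2))))

/-- The set of blocks of `P(X)`; it has `2n` elements. -/
abbrev BX (n m : ℕ) (hm : m % 2 = 0) := Quotient (orbitSetoid (Xel n m hm))

/-- `q_A = q_X(g_A) ∈ P_{2n}`. -/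
def qAel (n m : ℕ) (hm : m % 2 = 0) : Setoid (BX n m hm) :=
  qc (Xel n m hm) (gA n m)

/-- `q_B = q_X(g_B) ∈ P_{2n}`. -/
def qBel (n m : ℕ) (hm : m % 2 = 0) : Setoid (BX n m hm) :=
  qc (Xel n m hm) (gB n m)

/-! ## Doubled elements (two copies) -/

/-- Two copies of the index set `{1,…,mn}`. -/
abbrev DIdx (n m : ℕ) := (Fin n × Fin m) ⊕ (Fin n × Fin m)

/-- `g̃_A = g_A ⊕ g_A`. -/
def gAt (n m : ℕ) : Equiv.Perm (DIdx n m) := Equiv.sumCongr (gA n m) (gA n m)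

/-- `g̃_B = g_B ⊕ g_B`. -/
def gBt (n m : ℕ) : Equiv.Perm (DIdx n m) := Equiv.sumCongr (gB n m) (gB n m)

/-- `X̃ = X ⊕ X`. -/
def Xt (n m : ℕ) (hm : m % 2 = 0) : Equiv.Perm (DIdx n m) :=
  Equiv.sumCongr (Xel n m hm) (Xel n m hm)

/-- The set of blocks of `P(X̃)`; it has `4n` elements. -/
abbrev BXt (n m : ℕ) (hm : m % 2 = 0) := Quotient (orbitSetoid (Xt n m hm))

/-- `q̃_A = q_{X̃}(g̃_A) ∈ P_{4n}`. -/
def qAt (n m : ℕ) (hm : m % 2 = 0) : Setoid (BXt n m hm) :=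
  qc (Xt n m hm) (gAt n m)

/-- `q̃_B = q_{X̃}(g̃_B) ∈ P_{4n}`. -/
def qBt (n m : ℕ) (hm : m % 2 = 0) : Setoid (BXt n m hm) :=
  qc (Xt n m hm) (gBt n m)

/-- A block of `P(X̃)` lies in the first copy. -/
def inCopy1 {n m : ℕ} {hm : m % 2 = 0} (u : BXt n m hm) : Prop :=
  ∃ x, Quotient.mk (orbitSetoid (Xt n m hm)) (Sum.inl x) = u

/-- `#₁⁽¹⁾(q)`: the number of singlets of `q` among the first-copy positions. -/
def nS1 {n m : ℕ} {hm : m % 2 = 0} (q : Setoid (BXt n m hm)) : ℤ :=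
  Nat.card {u : BXt n m hm // IsSinglet q u ∧ inCopy1 u}

/-- `#₁⁽²⁾(q)`: the number of singlets of `q` among the second-copy positions. -/
def nS2 {n m : ℕ} {hm : m % 2 = 0} (q : Setoid (BXt n m hm)) : ℤ :=
  Nat.card {u : BXt n m hm // IsSinglet q u ∧ ¬ inCopy1 u}

/-- `τ ∈ P_{4n}`, the two-block partition separating the two copies. -/
def tau (n m : ℕ) (hm : m % 2 = 0) : Setoid (BXt n m hm) where
  r u v := inCopy1 u ↔ inCopy1 v
  iseqv := ⟨fun _ => Iff.rfl, Iff.symm, Iff.trans⟩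

/-! ## Graphs, cuts and optimization programs -/

variable {V : Type*}

/-- Sum of an edge function along (the edge list of) a walk, with multiplicity. -/
def wkSum {β : Type*} [AddCommMonoid β] {G : SimpleGraph V} {x y : V}
    (f : Sym2 V → β) (L : G.Walk x y) : β :=
  (L.edges.map f).sum

variable [Fintype V]

/-- Sum of an edge weight function over a set of edges. -/
def wsum (f : Sym2 V → ℝ) (S : Set (Sym2 V)) : ℝ :=
  ∑ e ∈ Finset.univ.filter (· ∈ S), f e

/-- The cut surface `μ(r)`: edges of `G` with one endpoint in `r`, the other outside. -/
def mu (G : SimpleGraph V) (r : Set V) : Set (Sym2 V) :=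
  {e | e ∈ G.edgeSet ∧ ∃ x y, e = s(x, y) ∧ x ∈ r ∧ y ∉ r}

/-- `μ(r₁:r₂)`: edges of `G` with an endpoint in `r₁` and an endpoint in `r₂`. -/
def mu2 (G : SimpleGraph V) (r₁ r₂ : Set V) : Set (Sym2 V) :=
  {e | e ∈ G.edgeSet ∧ ∃ x y, e = s(x, y) ∧ x ∈ r₁ ∧ y ∈ r₂}

/-- `r` is a cut for `X : Y`. -/
def IsCut (X Y r : Set V) : Prop := X ⊆ r ∧ Y ⊆ rᶜ

/-- The minimal cut area `𝒜(X:Y)`. -/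
def minCut (G : SimpleGraph V) (w : Sym2 V → ℝ) (X Y : Set V) : ℝ :=
  sInf {a | ∃ r : Set V, IsCut X Y r ∧ a = wsum w (mu G r)}

/-- `(α,β,γ)` is a triway cut for `(A,B,C)`. -/
def IsTriway (A B C α β γ : Set V) : Prop :=
  α ∪ β ∪ γ = Set.univ ∧ Disjoint α β ∧ Disjoint β γ ∧ Disjoint α γ ∧
    A ⊆ α ∧ B ⊆ β ∧ C ⊆ γ

/-- The area of a triway cut with tensions `(t_{A:B}, t_{B:C}, t_{C:A})`. -/
def triArea (G : SimpleGraph V) (w : Sym2 V → ℝ) (tAB tBC tCA : ℝ)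
    (α β γ : Set V) : ℝ :=
  tAB * wsum w (mu2 G α β) + tBC * wsum w (mu2 G β γ) + tCA * wsum w (mu2 G γ α)

/-- The minimal triway cut area `𝒜_t(A:B:C)`. -/
def triCut (G : SimpleGraph V) (w : Sym2 V → ℝ) (tAB tBC tCA : ℝ)
    (A B C : Set V) : ℝ :=
  sInf {a | ∃ α β γ : Set V, IsTriway A B C α β γ ∧ a = triArea G w tAB tBC tCA α β γ}

/-- Boundary data: `∂ = A ⊔ B ⊔ C` (pairwise disjoint). -/
def Bdy (A B C : Set V) : Prop := Disjoint A B ∧ Disjoint A C ∧ Disjoint B C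

/-! ### The permutation optimization `R` -/

/-- The symmetric edge function induced by the Cayley distance of a vertex
configuration of permutations. -/
def permE {ι : Type*} [Fintype ι] (g : V → Equiv.Perm ι) : Sym2 V → ℝ :=
  Sym2.lift ⟨fun x y => (cayley (g x) (g y) : ℝ),
    fun x y => congrArg Int.cast (cayley_comm (g x) (g y))⟩

/-- The free energy `R(g) = Σ_e w(e) d(g(x),g(y))`. -/
def Renergy {ι : Type*} [Fintype ι] (G : SimpleGraph V) (w : Sym2 V → ℝ)
    (g : V → Equiv.Perm ι) : ℝ :=
  wsum (fun e => w e * permE g e) G.edgeSet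

/-- The optimal value `R` of the permutation optimization. -/
def Rval {ι : Type*} [Fintype ι] (G : SimpleGraph V) (w : Sym2 V → ℝ)
    (A B C : Set V) (g₁ g₂ : Equiv.Perm ι) : ℝ :=
  sInf {a | ∃ g : V → Equiv.Perm ι,
    (∀ v ∈ A, g v = g₁) ∧ (∀ v ∈ B, g v = g₂) ∧ (∀ v ∈ C, g v = 1) ∧
    a = Renergy G w g}

/-! ### The set-partition optimization `Q` -/

/-- The symmetric integer edge function induced by the partition distance of a vertex
configuration of partitions. -/
def partEZ {κ : Type*} (q : V → Setoid κ) : Sym2 V → ℤ :=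
  Sym2.lift ⟨fun x y => pdist (q x) (q y), fun x y => pdist_comm (q x) (q y)⟩

/-- The free energy `Q(q) = Σ_e w(e) d(q(x),q(y))`. -/
def Qenergy {κ : Type*} (G : SimpleGraph V) (w : Sym2 V → ℝ)
    (q : V → Setoid κ) : ℝ :=
  wsum (fun e => w e * (partEZ q e : ℝ)) G.edgeSet

/-- The optimal value `Q` of the set-partition optimization. -/
def Qval {κ : Type*} (G : SimpleGraph V) (w : Sym2 V → ℝ)
    (A B C : Set V) (q₁ q₂ : Setoid κ) : ℝ :=
  sInf {a | ∃ q : V → Setoid κ,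
    (∀ v ∈ A, q v = q₁) ∧ (∀ v ∈ B, q v = q₂) ∧ (∀ v ∈ C, q v = ⊥) ∧
    a = Qenergy G w q}

/-! ### The Boolean optimization `B` -/

/-- The Hamming distance between two bit strings. -/
def ham {κ : Type*} [Fintype κ] (b₁ b₂ : κ → Bool) : ℤ :=
  ∑ k : κ, if b₁ k = b₂ k then 0 else 1

/-- The bit string `b(q)` of a partition: `false` exactly at singlets. -/
def bvec {κ : Type*} (p : Setoid κ) : κ → Bool :=
  fun u => if IsSinglet p u then false else true

/-- Feasibility of `r` for the Boolean program at configuration `b`. -/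
def Bfeas {κ : Type*} [Fintype κ] (G : SimpleGraph V) (A B : Set V) (n : ℕ)
    (b : V → κ → Bool) (r : Sym2 V → ℕ) : Prop :=
  (∀ x ∈ A, ∀ y ∈ B, ∀ L : G.Walk x y,
    2 ∣ wkSum (fun e => (r e : ℤ)) L ∧
    wkSum (fun e => (r e : ℤ)) L ≥
      2 * ((n : ℤ) - if ∀ v ∈ L.support, ∀ k, b v k = true then 1 else 0)) ∧
  (∀ x y : V, G.Adj x y → (r s(x, y) : ℤ) ≥ ⌈(ham (b x) (b y) : ℚ) / 2⌉)

/-- The inner Boolean optimum `B(b)` at a fixed Boolean configuration `b`. -/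
def BvalAt {κ : Type*} [Fintype κ] (G : SimpleGraph V) (w : Sym2 V → ℝ)
    (A B : Set V) (n : ℕ) (b : V → κ → Bool) : ℝ :=
  sInf {a | ∃ r : Sym2 V → ℕ, Bfeas G A B n b r ∧
    a = wsum (fun e => w e * (r e : ℝ)) G.edgeSet}

/-- The optimal value `B` of the Boolean optimization. -/
def Bval (κ : Type*) [Fintype κ] (G : SimpleGraph V) (w : Sym2 V → ℝ)
    (A B C : Set V) (n : ℕ) : ℝ :=
  sInf {a | ∃ b : V → κ → Bool,
    (∀ v ∈ A ∪ B, ∀ k, b v k = true) ∧ (∀ v ∈ C, ∀ k, b v k = false) ∧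
    ∃ r : Sym2 V → ℕ, Bfeas G A B n b r ∧
      a = wsum (fun e => w e * (r e : ℝ)) G.edgeSet}

/-! ### The integer program `I` -/

/-- Feasibility of `(ρ,σ)` for the integer program. -/
def IPfeas (G : SimpleGraph V) (A B C : Set V) (n : ℕ) (ρ σ : Sym2 V → ℕ) : Prop :=
  (∀ x ∈ A, ∀ y ∈ B, ∀ L : G.Walk x y,
    2 ∣ wkSum (fun e => (σ e : ℤ) + (ρ e : ℤ)) L ∧
    wkSum (fun e => (σ e : ℤ) + (ρ e : ℤ)) L ≥
      2 * ((n : ℤ) - if wkSum (fun e => (ρ e : ℤ)) L = 0 then 1 else 0)) ∧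
  (∀ x ∈ A ∪ B, ∀ y ∈ C, ∀ L : G.Walk x y,
    wkSum (fun e => (ρ e : ℤ)) L ≥ (n : ℤ))

/-- The objective of the integer program. -/
def IPobj (G : SimpleGraph V) (w : Sym2 V → ℝ) (ρ σ : Sym2 V → ℕ) : ℝ :=
  wsum (fun e => w e * ((σ e : ℝ) + (ρ e : ℝ))) G.edgeSet

/-- The optimal value `I` of the integer program. -/
def Ival (G : SimpleGraph V) (w : Sym2 V → ℝ) (A B C : Set V) (n : ℕ) : ℝ :=
  sInf {a | ∃ ρ σ : Sym2 V → ℕ, IPfeas G A B C n ρ σ ∧ a = IPobj G w ρ σ}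

/-! ### The ℓ-intersecting cut problem `M` -/

/-- Feasibility for the `ℓ`-intersecting cut problem with boundary sets
`Γ₀, …, Γ_ℓ` and `C`, for a half-integer valued `ϱ`. -/
def Mfeas (G : SimpleGraph V) (Γ : ℕ → Set V) (ℓ : ℕ) (C : Set V)
    (ϱ : Sym2 V → ℚ) : Prop :=
  (∀ e, ∃ j : ℕ, ϱ e = (j : ℚ) / 2) ∧
  (∀ k k' : ℕ, k ≤ ℓ → k' ≤ ℓ → ∀ x ∈ Γ k, ∀ y ∈ Γ k', ∀ L : G.Walk x y,
    ∃ j : ℕ, wkSum ϱ L = |(k : ℚ) - (k' : ℚ)| + (j : ℚ)) ∧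
  (∀ k : ℕ, k ≤ ℓ → ∀ x ∈ Γ k, ∀ y ∈ C, ∀ L : G.Walk x y,
    ∃ j : ℕ, wkSum ϱ L = (ℓ : ℚ) / 2 + (j : ℚ))

/-- The objective of the `ℓ`-intersecting cut problem. -/
def Mobj (G : SimpleGraph V) (w : Sym2 V → ℝ) (ϱ : Sym2 V → ℚ) : ℝ :=
  wsum (fun e => w e * (ϱ e : ℝ)) G.edgeSet

/-- The optimal value `M` of the `ℓ`-intersecting cut problem. -/
def Mval (G : SimpleGraph V) (w : Sym2 V → ℝ) (Γ : ℕ → Set V) (ℓ : ℕ)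
    (C : Set V) : ℝ :=
  sInf {a | ∃ ϱ : Sym2 V → ℚ, Mfeas G Γ ℓ C ϱ ∧ a = Mobj G w ϱ}

/-- The complementary reduced graph `G^c`: the edges of `G` not lying entirely
inside `V'`. -/
def reducedGraph (G : SimpleGraph V) (V' : Set V) : SimpleGraph V where
  Adj x y := G.Adj x y ∧ ¬ (x ∈ V' ∧ y ∈ V')
  symm := by
    refine ⟨?_⟩
    intro x y h
    exact ⟨h.1.symm, fun hc => h.2 ⟨hc.2, hc.1⟩⟩
  loopless := by
    refine ⟨?_⟩
    intro x h
    exact G.loopless.irrefl x h.1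

end RTN

namespace RTN

section Aux
variable {α : Type*}

lemma nb_antitone [Finite α] {s t : Setoid α} (h : s ≤ t) : nb t ≤ nb s := by
  unfold nb
  have : Function.Surjective (fun c : Quotient s => Quotient.map' id (fun a b hab => h hab) c : Quotient s → Quotient t) := by
    intro c
    obtain ⟨x, rfl⟩ := Quotient.exists_rep c
    exact ⟨Quotient.mk s x, rfl⟩
  exact_mod_cast Nat.card_le_card_of_surjective _ this

lemma nb_le_one_of_total [Finite α] {s : Setoid α} (h : ∀ x y, s x y) : nb s ≤ 1 := by
  have : Subsingleton (Quotient s) := by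
    constructor
    intro a b
    obtain ⟨x, rfl⟩ := Quotient.exists_rep a
    obtain ⟨y, rfl⟩ := Quotient.exists_rep b
    exact Quotient.sound (h x y)
  unfold nb
  rcases isEmpty_or_nonempty (Quotient s) with he | hne
  · simp [Nat.card_of_isEmpty]
  · exact le_of_eq (by exact_mod_cast Nat.card_unique)

lemma one_le_nb [Finite α] [Nonempty α] (s : Setoid α) : 1 ≤ nb s := by
  unfold nb
  have : Nonempty (Quotient s) := ⟨Quotient.mk s (Classical.arbitrary α)⟩
  exact_mod_cast Nat.one_le_iff_ne_zero.mpr (Nat.card_ne_zero.mpr ⟨this, inferInstance⟩)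

/-- The partition with a single nontrivial block `{x,y}`. -/
def pairSetoid (x y : α) : Setoid α where
  r u v := u = v ∨ ((u = x ∨ u = y) ∧ (v = x ∨ v = y))
  iseqv := by
    refine ⟨fun u => Or.inl rfl, ?_, ?_⟩
    · rintro u v (rfl | ⟨hu, hv⟩)
      · exact Or.inl rfl
      · exact Or.inr ⟨hv, hu⟩
    · rintro u v w (rfl | ⟨hu, hv⟩) (rfl | ⟨hv', hw⟩)
      · exact Or.inl rfl
      · exact Or.inr ⟨hv', hw⟩
      · exact Or.inr ⟨hu, hv⟩
      · exact Or.inr ⟨hu, hw⟩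

lemma pairSetoid_le {s : Setoid α} {x y : α} (h : s x y) : pairSetoid x y ≤ s := by
  rw [Setoid.le_def]
  rintro u v (rfl | ⟨(rfl | rfl), (rfl | rfl)⟩)
  · exact s.refl _
  · exact s.refl _
  · exact h
  · exact s.symm h
  · exact s.refl _

/-- Explicit description of the join with a pair. -/
def mergeSetoid (s : Setoid α) (x y : α) : Setoid α where
  r u v := s u v ∨ (s u x ∧ s y v) ∨ (s u y ∧ s x v)
  iseqv := by
    refine ⟨fun u => Or.inl (s.refl u), ?_, ?_⟩
    · rintro u v (h | ⟨h1, h2⟩ | ⟨h1, h2⟩)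
      · exact Or.inl (s.symm h)
      · exact Or.inr (Or.inr ⟨s.symm h2, s.symm h1⟩)
      · exact Or.inr (Or.inl ⟨s.symm h2, s.symm h1⟩)
    · rintro u v w (h | ⟨h1, h2⟩ | ⟨h1, h2⟩) (h' | ⟨h1', h2'⟩ | ⟨h1', h2'⟩)
      · exact Or.inl (s.trans h h')
      · exact Or.inr (Or.inl ⟨s.trans h h1', h2'⟩)
      · exact Or.inr (Or.inr ⟨s.trans h h1', h2'⟩)
      · exact Or.inr (Or.inl ⟨h1, s.trans h2 h'⟩)
      · exact Or.inl (s.trans (s.trans h1 (s.symm h1')) (s.trans (s.symm h2) h2'))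
      · exact Or.inl (s.trans h1 h2')
      · exact Or.inr (Or.inr ⟨h1, s.trans h2 h'⟩)
      · exact Or.inl (s.trans h1 h2')
      · exact Or.inr (Or.inr ⟨h1, h2'⟩)

lemma sup_pair_eq_merge (s : Setoid α) (x y : α) : s ⊔ pairSetoid x y = mergeSetoid s x y := by
  apply le_antisymm
  · apply sup_le
    · rw [Setoid.le_def]; intro u v h; exact Or.inl h
    · rw [Setoid.le_def]
      rintro u v (rfl | ⟨(rfl | rfl), (rfl | rfl)⟩)
      · exact Or.inl (s.refl _)
      · exact Or.inl (s.refl _)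
      · exact Or.inr (Or.inl ⟨s.refl _, s.refl _⟩)
      · exact Or.inr (Or.inr ⟨s.refl _, s.refl _⟩)
      · exact Or.inl (s.refl _)
  · rw [Setoid.le_def]
    rintro u v (h | ⟨h1, h2⟩ | ⟨h1, h2⟩)
    · exact le_sup_left (α := Setoid α) h
    · have hp : (s ⊔ pairSetoid x y) x y :=
        le_sup_right (α := Setoid α) (Or.inr ⟨Or.inl rfl, Or.inr rfl⟩)
      exact (s ⊔ pairSetoid x y).trans (le_sup_left (α := Setoid α) h1)
        ((s ⊔ pairSetoid x y).trans hp (le_sup_left (α := Setoid α) h2))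
    · have hp : (s ⊔ pairSetoid x y) y x :=
        le_sup_right (α := Setoid α) (Or.inr ⟨Or.inr rfl, Or.inl rfl⟩)
      exact (s ⊔ pairSetoid x y).trans (le_sup_left (α := Setoid α) h1)
        ((s ⊔ pairSetoid x y).trans hp (le_sup_left (α := Setoid α) h2))


section cards
variable [Finite α] (s : Setoid α) (x y : α)

/-- The natural map to the merged quotient. -/
private def phi : Quotient s → Quotient (mergeSetoid s x y) :=
  Quotient.map' id (fun a b hab => Or.inl hab)

private lemma phi_mk (a : α) :
    phi s x y (Quotient.mk s a) = Quotient.mk (mergeSetoid s x y) a := rfl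

private lemma phi_eq {c d : Quotient s} (h : phi s x y c = phi s x y d) :
    c = d ∨ (c = Quotient.mk s x ∧ d = Quotient.mk s y) ∨
      (c = Quotient.mk s y ∧ d = Quotient.mk s x) := by
  obtain ⟨a, rfl⟩ := Quotient.exists_rep c
  obtain ⟨b, rfl⟩ := Quotient.exists_rep d
  rw [phi_mk, phi_mk] at h
  have := Quotient.exact h
  rcases this with h' | ⟨h1, h2⟩ | ⟨h1, h2⟩
  · exact Or.inl (Quotient.sound h')
  · exact Or.inr (Or.inl ⟨Quotient.sound h1, Quotient.sound (s.symm h2)⟩)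
  · exact Or.inr (Or.inr ⟨Quotient.sound h1, Quotient.sound (s.symm h2)⟩)

private lemma phi_surj : Function.Surjective (phi s x y) := by
  intro c
  obtain ⟨a, rfl⟩ := Quotient.exists_rep c
  exact ⟨Quotient.mk s a, rfl⟩

lemma nb_sup_pair_ge : nb s - 1 ≤ nb (s ⊔ pairSetoid x y) := by
  rw [sup_pair_eq_merge]
  have hinj : Function.Injective
      (fun c : {c : Quotient s // c ≠ Quotient.mk s y} => phi s x y c.val) := by
    rintro ⟨c, hc⟩ ⟨d, hd⟩ h
    rcases phi_eq s x y h with h' | ⟨h1, h2⟩ | ⟨h1, h2⟩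
    · exact Subtype.ext h'
    · exact absurd h2 hd
    · exact absurd h1 hc
  have h1 : Nat.card {c : Quotient s // c ≠ Quotient.mk s y} ≤
      Nat.card (Quotient (mergeSetoid s x y)) :=
    Nat.card_le_card_of_injective _ hinj
  have h2 : Nat.card (Quotient s) ≤ Nat.card {c : Quotient s // c ≠ Quotient.mk s y} + 1 := by
    have e : Nat.card (Quotient s) = Nat.card {c : Quotient s // c = Quotient.mk s y}
        + Nat.card {c : Quotient s // c ≠ Quotient.mk s y} := by
      rw [← Nat.card_sum]
      exact (Nat.card_congr (Equiv.sumCompl (· = Quotient.mk s y)).symm)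
    have : Nat.card {c : Quotient s // c = Quotient.mk s y} ≤ 1 := by
      have : Subsingleton {c : Quotient s // c = Quotient.mk s y} := by
        constructor; rintro ⟨c, rfl⟩ ⟨d, hd⟩; exact Subtype.ext hd.symm
      rcases isEmpty_or_nonempty {c : Quotient s // c = Quotient.mk s y} with he | hne
      · simp [Nat.card_of_isEmpty]
      · exact le_of_eq Nat.card_unique
    omega
  unfold nb
  omega

lemma nb_sup_pair_lt (hxy : ¬ s x y) : nb (s ⊔ pairSetoid x y) ≤ nb s - 1 := by
  rw [sup_pair_eq_merge]
  have hsurj : Function.Surjective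
      (fun c : {c : Quotient s // c ≠ Quotient.mk s y} => phi s x y c.val) := by
    intro d
    obtain ⟨c, rfl⟩ := phi_surj s x y d
    by_cases hc : c = Quotient.mk s y
    · refine ⟨⟨Quotient.mk s x, ?_⟩, ?_⟩
      · intro h; exact hxy (Quotient.exact h)
      · subst hc
        simp only [phi_mk]
        exact Quotient.sound (Or.inr (Or.inl ⟨s.refl x, s.refl y⟩))
    · exact ⟨⟨c, hc⟩, rfl⟩
  have h1 : Nat.card (Quotient (mergeSetoid s x y)) ≤
      Nat.card {c : Quotient s // c ≠ Quotient.mk s y} :=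
    Nat.card_le_card_of_surjective _ hsurj
  have h2 : Nat.card {c : Quotient s // c ≠ Quotient.mk s y} + 1 ≤ Nat.card (Quotient s) := by
    have e : Nat.card (Quotient s) = Nat.card {c : Quotient s // c = Quotient.mk s y}
        + Nat.card {c : Quotient s // c ≠ Quotient.mk s y} := by
      rw [← Nat.card_sum]
      exact (Nat.card_congr (Equiv.sumCompl (· = Quotient.mk s y)).symm)
    have : Nat.card {c : Quotient s // c = Quotient.mk s y} = 1 := by
      have h3 : Subsingleton {c : Quotient s // c = Quotient.mk s y} := by
        constructor; rintro ⟨c, rfl⟩ ⟨d, hd⟩; exact Subtype.ext hd.symm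
      have h4 : Nonempty {c : Quotient s // c = Quotient.mk s y} := ⟨⟨_, rfl⟩⟩
      exact Nat.card_unique
    omega
  unfold nb
  omega

end cards

/-- Submodularity-type key inequality. -/
lemma nb_K [Finite α] : ∀ (N : ℕ) (q a b : Setoid α), Nat.card (Quotient q) ≤ N →
    q ≤ a → q ≤ b → nb a + nb b ≤ nb q + nb (a ⊔ b) := by
  intro N
  induction N with
  | zero =>
    intro q a b hN _ _
    rcases isEmpty_or_nonempty α with he | hne
    · have h0 : ∀ t : Setoid α, nb t = 0 := fun t => by
        have : IsEmpty (Quotient t) := ⟨fun c => (Quotient.exists_rep c).elim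
          (fun x _ => he.elim x)⟩
        simp [nb, Nat.card_of_isEmpty]
      simp [h0]
    · exact absurd hN (by
        have : Nonempty (Quotient q) := ⟨Quotient.mk q (Classical.arbitrary α)⟩
        have := Nat.card_pos (α := Quotient q)
        omega)
  | succ N ih =>
    intro q a b hN hqa hqb
    by_cases hbq : b ≤ q
    · have hbq' : b = q := le_antisymm hbq hqb
      subst hbq'
      have : a ⊔ b = a := sup_eq_left.mpr hqa
      rw [this]; ring_nf; omega
    · have : ∃ x y, b x y ∧ ¬ q x y := by
        by_contra hc
        push_neg at hc
        exact hbq (Setoid.le_def.mpr (fun {x y} h => hc x y h))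
      obtain ⟨x, y, hbxy, hqxy⟩ := this
      set q' := q ⊔ pairSetoid x y with hq'
      have hq'b : q' ≤ b := sup_le hqb (pairSetoid_le hbxy)
      have hq'a : q' ≤ a ⊔ pairSetoid x y := sup_le_sup_right hqa _
      have hdrop : nb q' ≤ nb q - 1 := nb_sup_pair_lt q x y hqxy
      have hNq' : Nat.card (Quotient q') ≤ N := by
        have h1 := hdrop
        unfold nb at h1
        omega
      have hIH := ih q' (a ⊔ pairSetoid x y) b hNq' hq'a hq'b
      have hsup : a ⊔ pairSetoid x y ⊔ b = a ⊔ b := by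
        rw [sup_assoc]
        congr 1
        exact sup_eq_right.mpr (pairSetoid_le hbxy)
      have hge : nb a - 1 ≤ nb (a ⊔ pairSetoid x y) := nb_sup_pair_ge a x y
      have hdrop' : nb q - 1 ≤ nb q' := nb_sup_pair_ge q x y
      rw [hsup] at hIH
      omega

lemma nb_key [Finite α] {q a b : Setoid α} (hqa : q ≤ a) (hqb : q ≤ b) :
    nb a + nb b ≤ nb q + nb (a ⊔ b) :=
  nb_K (Nat.card (Quotient q)) q a b le_rfl hqa hqb

lemma pdist_self (p : Setoid α) : pdist p p = 0 := by
  unfold pdist; rw [sup_idem]; ring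

lemma pdist_triangle [Finite α] (p q r : Setoid α) :
    pdist p r ≤ pdist p q + pdist q r := by
  have hk := nb_key (q := q) (a := p ⊔ q) (b := q ⊔ r) le_sup_right le_sup_left
  have hsup : p ⊔ q ⊔ (q ⊔ r) = p ⊔ q ⊔ r := by
    rw [sup_assoc p q (q ⊔ r), ← sup_assoc q q r, sup_idem, ← sup_assoc]
  rw [hsup] at hk
  have hmono : nb (p ⊔ q ⊔ r) ≤ nb (p ⊔ r) := by
    apply nb_antitone
    exact sup_le (le_sup_left.trans le_sup_left) le_sup_right
  unfold pdist
  omega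


end Aux

section Walks

variable {V : Type*} {κ : Type*} [Finite κ]

lemma partEZ_mk (q : V → Setoid κ) (x y : V) : partEZ q s(x, y) = pdist (q x) (q y) := rfl

lemma wkSum_ge_pdist {G : SimpleGraph V} {x y : V} (q : V → Setoid κ) (L : G.Walk x y) :
    pdist (q x) (q y) ≤ wkSum (partEZ q) L := by
  induction L with
  | nil => simp [wkSum, pdist_self]
  | @cons a b c h L ih =>
    have := pdist_triangle (q a) (q b) (q c)
    simp only [wkSum, SimpleGraph.Walk.edges_cons, List.map_cons, List.sum_cons, partEZ_mk]
    simp only [wkSum] at ih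
    omega

lemma wkSum_parity {G : SimpleGraph V} {x y : V} (q : V → Setoid κ) (L : G.Walk x y) :
    2 ∣ wkSum (partEZ q) L - nb (q x) - nb (q y) := by
  induction L with
  | nil => simp [wkSum]; omega
  | @cons a b c h L ih =>
    simp only [wkSum, SimpleGraph.Walk.edges_cons, List.map_cons, List.sum_cons, partEZ_mk]
    simp only [wkSum] at ih
    have : pdist (q a) (q b) = nb (q a) + nb (q b) - 2 * nb (q a ⊔ q b) := rfl
    omega

lemma wkSum_split {β : Type*} [AddCommMonoid β] [DecidableEq V] {G : SimpleGraph V} {x y : V}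
    (f : Sym2 V → β) (L : G.Walk x y) {v : V} (hv : v ∈ L.support) :
    wkSum f L = wkSum f (L.takeUntil v hv) + wkSum f (L.dropUntil v hv) := by
  have h : (L.takeUntil v hv).edges ++ (L.dropUntil v hv).edges = L.edges := by
    rw [← SimpleGraph.Walk.edges_append, SimpleGraph.Walk.take_spec]
  unfold wkSum
  rw [← h, List.map_append, List.sum_append]

end Walks

section Struct

lemma prodCongr_pow {A B : Type*} (a : Equiv.Perm A) (b : Equiv.Perm B) (k : ℕ) (x : A × B) :
    ((Equiv.prodCongr a b) ^ k) x = ((a ^ k) x.1, (b ^ k) x.2) := by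
  induction k with
  | zero => simp
  | succ k ih =>
    rw [pow_succ', pow_succ', pow_succ']
    simp only [Equiv.Perm.mul_apply]
    rw [ih]
    rfl

lemma permCongr_pow {A B : Type*} (e : A ≃ B) (τ : Equiv.Perm A) (k : ℕ) (x : B) :
    ((e.permCongr τ) ^ k) x = e ((τ ^ k) (e.symm x)) := by
  induction k with
  | zero => simp
  | succ k ih =>
    rw [pow_succ', pow_succ']
    simp only [Equiv.Perm.mul_apply]
    rw [ih, Equiv.permCongr_apply]
    simp

lemma conj_pow' {G : Type*} [Group G] (g h : G) (k : ℕ) :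
    (h⁻¹ * g * h) ^ k = h⁻¹ * g ^ k * h := by
  induction k with
  | zero => simp
  | succ k ih => rw [pow_succ, pow_succ, ih]; group

lemma orbit_nat {A : Type*} [Finite A] (g : Equiv.Perm A) (x y : A) :
    (orbitSetoid g).r x y ↔ ∃ k : ℕ, (g ^ k) x = y := by
  constructor
  · rintro ⟨k, rfl⟩
    refine ⟨(k % (orderOf g : ℤ)).toNat, ?_⟩
    have h0 : (0 : ℤ) < (orderOf g : ℤ) := by exact_mod_cast orderOf_pos g
    have h1 : (0:ℤ) ≤ k % (orderOf g : ℤ) := Int.emod_nonneg k (by omega)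
    rw [← zpow_natCast, Int.toNat_of_nonneg h1, zpow_mod_orderOf]
  · rintro ⟨k, rfl⟩
    exact ⟨(k : ℤ), by rw [zpow_natCast]⟩

open Fin.NatCast Fin.CommRing in
lemma finRotate_pow (N k : ℕ) (b : Fin (N + 1)) :
    ((finRotate (N + 1)) ^ k) b = b + (k : Fin (N + 1)) := by
  induction k with
  | zero => simp
  | succ k ih =>
    rw [pow_succ']
    simp only [Equiv.Perm.mul_apply]
    rw [ih, finRotate_succ_apply]
    push_cast
    ring

open Fin.NatCast Fin.CommRing in
lemma finRotate_orbit (N : ℕ) (b b' : Fin (N + 1)) :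
    ∃ k : ℕ, ((finRotate (N + 1)) ^ k) b = b' :=
  ⟨(b' - b).val, by rw [finRotate_pow, Fin.cast_val_eq_self]; ring⟩

lemma finRotate_orbit' {N : ℕ} (hN : 1 ≤ N) (b b' : Fin N) :
    ∃ k : ℕ, ((finRotate N) ^ k) b = b' := by
  match N, hN with
  | (M + 1), _ => exact finRotate_orbit M b b'

lemma finRotate_val {N : ℕ} (k : Fin (N + 2)) :
    ((finRotate (N + 2)) k).val = (k.val + 1) % (N + 2) := by
  rw [finRotate_succ_apply, Fin.add_def, Fin.val_one]

variable {n m : ℕ} (hm : m % 2 = 0)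

/-- value equation for `halfEquiv`. -/
lemma halfEquiv_val (x : Fin 2 × Fin (m / 2)) :
    ((halfEquiv m hm) x).val = x.2.val + (m / 2) * x.1.val := by
  simp [halfEquiv, finProdFinEquiv]

lemma halfEquiv_fst (ℓ : Fin m) :
    (((halfEquiv m hm).symm ℓ).1 : ℕ) = if m / 2 ≤ (ℓ : ℕ) then 1 else 0 := by
  have h := halfEquiv_val hm ((halfEquiv m hm).symm ℓ)
  rw [Equiv.apply_symm_apply] at h
  have h1 : (((halfEquiv m hm).symm ℓ).1 : ℕ) < 2 := ((halfEquiv m hm).symm ℓ).1.isLt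
  have h2 : (((halfEquiv m hm).symm ℓ).2 : ℕ) < m / 2 := ((halfEquiv m hm).symm ℓ).2.isLt
  have h0 : (((halfEquiv m hm).symm ℓ).1 : ℕ) = 0 ∨ (((halfEquiv m hm).symm ℓ).1 : ℕ) = 1 := by
    omega
  rcases h0 with h0 | h0 <;> rw [h0] at h <;> split <;> omega

/-- The key characterization of the orbits of `X`. -/
lemma xel_rel (hm2 : 2 ≤ m) (x y : Fin n × Fin m) :
    (orbitSetoid (Xel n m hm)).r x y ↔
      x.1 = y.1 ∧ (m / 2 ≤ (x.2 : ℕ) ↔ m / 2 ≤ (y.2 : ℕ)) := by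
  have hm1 : 1 ≤ m / 2 := by omega
  obtain ⟨M, hM⟩ : ∃ M, m / 2 = M + 1 := ⟨m / 2 - 1, by omega⟩
  rw [orbit_nat]
  constructor
  · rintro ⟨k, rfl⟩
    rw [show Xel n m hm = Equiv.prodCongr (Equiv.refl (Fin n))
      ((halfEquiv m hm).permCongr
        (Equiv.prodCongr (Equiv.refl (Fin 2)) (finRotate (m / 2)))) from rfl]
    rw [prodCongr_pow]
    refine ⟨by rw [show (Equiv.refl (Fin n) : Equiv.Perm (Fin n)) = 1 from rfl, one_pow]; rfl, ?_⟩
    rw [permCongr_pow, prodCongr_pow]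
    have hfst : ∀ z : Fin m, m / 2 ≤ (((halfEquiv m hm)
        ((((Equiv.refl (Fin 2)) ^ k) ((halfEquiv m hm).symm z).1,
          ((finRotate (m / 2)) ^ k) ((halfEquiv m hm).symm z).2)) : Fin m) : ℕ) ↔
        m / 2 ≤ (z : ℕ) := by
      intro z
      rw [halfEquiv_val hm]
      have := halfEquiv_fst hm z
      have hv := halfEquiv_val hm ((halfEquiv m hm).symm z)
      rw [Equiv.apply_symm_apply] at hv
      have h2 : ((((finRotate (m / 2)) ^ k) ((halfEquiv m hm).symm z).2 : Fin (m/2)) : ℕ)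
          < m / 2 := Fin.isLt _
      have h3 : ((((halfEquiv m hm).symm z).2 : Fin (m/2)) : ℕ) < m / 2 := Fin.isLt _
      rw [show (Equiv.refl (Fin 2) : Equiv.Perm (Fin 2)) = 1 from rfl, one_pow]
      simp only [Equiv.Perm.coe_one, id_eq]
      by_cases hz : m / 2 ≤ (z : ℕ)
      · rw [if_pos hz] at this
        rw [this] at hv ⊢
        omega
      · rw [if_neg hz] at this
        rw [this] at hv ⊢
        omega
    exact (hfst x.2).symm
  · rintro ⟨h1, h2⟩
    -- find k rotating the half-coordinate
    set e := halfEquiv m hm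
    have hfst : (e.symm x.2).1 = (e.symm y.2).1 := by
      have hx := halfEquiv_fst hm x.2
      have hy := halfEquiv_fst hm y.2
      apply Fin.ext
      rw [hx, hy]
      split <;> split <;> first | rfl | (exfalso; tauto)
    obtain ⟨k, hk⟩ : ∃ k : ℕ, ((finRotate (m / 2)) ^ k) (e.symm x.2).2 = (e.symm y.2).2 :=
      finRotate_orbit' hm1 _ _
    refine ⟨k, ?_⟩
    rw [show Xel n m hm = Equiv.prodCongr (Equiv.refl (Fin n))
      (e.permCongr (Equiv.prodCongr (Equiv.refl (Fin 2)) (finRotate (m / 2)))) from rfl]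
    rw [prodCongr_pow]
    have : ((e.permCongr (Equiv.prodCongr (Equiv.refl (Fin 2)) (finRotate (m / 2)))) ^ k) x.2
        = y.2 := by
      rw [permCongr_pow, prodCongr_pow]
      rw [show (Equiv.refl (Fin 2) : Equiv.Perm (Fin 2)) = 1 from rfl, one_pow]
      simp only [Equiv.Perm.coe_one, id_eq]
      rw [hk, hfst]
      exact Equiv.apply_symm_apply e y.2
    rw [this]
    have h4 : ((Equiv.refl (Fin n) : Equiv.Perm (Fin n)) ^ k) x.1 = y.1 := by
      rw [show (Equiv.refl (Fin n) : Equiv.Perm (Fin n)) = 1 from rfl, one_pow, ← h1]; rfl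
    rw [h4]


lemma gB_rel (hm2 : 2 ≤ m) (x y : Fin n × Fin m) :
    (orbitSetoid (gB n m)).r x y ↔ x.1 = y.1 := by
  obtain ⟨M, hM⟩ : ∃ M, m = M + 1 := ⟨m - 1, by omega⟩
  rw [orbit_nat]
  constructor
  · rintro ⟨k, rfl⟩
    rw [show gB n m = Equiv.prodCongr (Equiv.refl (Fin n)) (finRotate m) from rfl,
      prodCongr_pow, show (Equiv.refl (Fin n) : Equiv.Perm (Fin n)) = 1 from rfl, one_pow]
    rfl
  · intro h1
    obtain ⟨k, hk⟩ : ∃ k : ℕ, ((finRotate m) ^ k) x.2 = y.2 := finRotate_orbit' (by omega) _ _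
    refine ⟨k, ?_⟩
    rw [show gB n m = Equiv.prodCongr (Equiv.refl (Fin n)) (finRotate m) from rfl,
      prodCongr_pow, show (Equiv.refl (Fin n) : Equiv.Perm (Fin n)) = 1 from rfl, one_pow,
      hk]
    rw [show ((1 : Equiv.Perm (Fin n)) x.1, y.2) = (x.1, y.2) from rfl, h1]

lemma gamma_apply (x : Fin n × Fin m) :
    (gamma n m) x = if m / 2 ≤ (x.2 : ℕ) then (finRotate n x.1, x.2) else x := rfl

/-- first coordinate after applying `γ`. -/
def k1 (n m : ℕ) (x : Fin n × Fin m) : Fin n := ((gamma n m) x).1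

lemma k1_eq (x : Fin n × Fin m) :
    k1 n m x = if m / 2 ≤ (x.2 : ℕ) then finRotate n x.1 else x.1 := by
  unfold k1
  rw [gamma_apply]
  split <;> rfl

lemma gA_rel [NeZero n] (hm2 : 2 ≤ m) (x y : Fin n × Fin m) :
    (orbitSetoid (gA n m)).r x y ↔ k1 n m x = k1 n m y := by
  have key : ∀ z w : Fin n × Fin m,
      (∃ k : ℕ, ((gA n m) ^ k) z = w) ↔ ∃ k : ℕ, ((gB n m) ^ k) ((gamma n m) z) = (gamma n m) w := by
    intro z w
    constructor
    · rintro ⟨k, rfl⟩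
      refine ⟨k, ?_⟩
      rw [show gA n m = (gamma n m)⁻¹ * gB n m * gamma n m from rfl, conj_pow']
      simp [Equiv.Perm.mul_apply]
    · rintro ⟨k, hk⟩
      refine ⟨k, ?_⟩
      rw [show gA n m = (gamma n m)⁻¹ * gB n m * gamma n m from rfl, conj_pow']
      simp only [Equiv.Perm.mul_apply]
      rw [hk]
      simp
  rw [orbit_nat, key]
  rw [show (∃ k : ℕ, ((gB n m) ^ k) ((gamma n m) x) = (gamma n m) y)
      ↔ (orbitSetoid (gB n m)).r ((gamma n m) x) ((gamma n m) y) from (orbit_nat _ _ _).symm]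
  rw [gB_rel hm2]
  rfl

lemma xel_le_gB (hm2 : 2 ≤ m) :
    orbitSetoid (Xel n m hm) ≤ orbitSetoid (gB n m) := by
  rw [Setoid.le_def]
  intro x y h
  rw [xel_rel hm hm2] at h
  rw [show (orbitSetoid (gB n m)) x y ↔ (orbitSetoid (gB n m)).r x y from Iff.rfl,
    gB_rel hm2]
  exact h.1

lemma xel_le_gA [NeZero n] (hm2 : 2 ≤ m) :
    orbitSetoid (Xel n m hm) ≤ orbitSetoid (gA n m) := by
  rw [Setoid.le_def]
  intro x y h
  rw [xel_rel hm hm2] at h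
  rw [show (orbitSetoid (gA n m)) x y ↔ (orbitSetoid (gA n m)).r x y from Iff.rfl,
    gA_rel hm2]
  rw [k1_eq, k1_eq, h.1]
  by_cases h2 : m / 2 ≤ (x.2 : ℕ)
  · rw [if_pos h2, if_pos (h.2.mp h2)]
  · rw [if_neg h2, if_neg (fun hc => h2 (h.2.mpr hc))]

/-- Relation of a coarse-grained setoid when `P(X) ≤ P(g)`. -/
lemma qc_rel {A : Type*} (g₀ g : Equiv.Perm A) (hle : orbitSetoid g₀ ≤ orbitSetoid g)
    (x y : A) :
    (qc g₀ g).r (Quotient.mk (orbitSetoid g₀) x) (Quotient.mk (orbitSetoid g₀) y) ↔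
      (orbitSetoid g).r x y := by
  have hsup : orbitSetoid g ⊔ orbitSetoid g₀ = orbitSetoid g := sup_eq_left.mpr hle
  constructor
  · rintro ⟨x', y', hx', hy', hrel⟩
    rw [hsup] at hrel
    have h1 : (orbitSetoid g).r x' x := hle (Quotient.exact hx')
    have h2 : (orbitSetoid g).r y' y := hle (Quotient.exact hy')
    exact (orbitSetoid g).trans ((orbitSetoid g).symm h1) ((orbitSetoid g).trans hrel h2)
  · intro h
    exact ⟨x, y, rfl, rfl, by rw [hsup]; exact h⟩

lemma qB_rel (hm2 : 2 ≤ m) (x y : Fin n × Fin m) :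
    (qBel n m hm).r (Quotient.mk (orbitSetoid (Xel n m hm)) x)
      (Quotient.mk (orbitSetoid (Xel n m hm)) y) ↔ x.1 = y.1 := by
  rw [show qBel n m hm = qc (Xel n m hm) (gB n m) from rfl,
    qc_rel _ _ (xel_le_gB hm hm2), gB_rel hm2]

lemma qA_rel [NeZero n] (hm2 : 2 ≤ m) (x y : Fin n × Fin m) :
    (qAel n m hm).r (Quotient.mk (orbitSetoid (Xel n m hm)) x)
      (Quotient.mk (orbitSetoid (Xel n m hm)) y) ↔ k1 n m x = k1 n m y := by
  rw [show qAel n m hm = qc (Xel n m hm) (gA n m) from rfl,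
    qc_rel _ _ (xel_le_gA hm hm2), gA_rel hm2]

lemma mkX_eq (hm2 : 2 ≤ m) (x y : Fin n × Fin m) :
    (Quotient.mk (orbitSetoid (Xel n m hm)) x = Quotient.mk (orbitSetoid (Xel n m hm)) y)
      ↔ (x.1 = y.1 ∧ (m / 2 ≤ (x.2 : ℕ) ↔ m / 2 ≤ (y.2 : ℕ))) := by
  constructor
  · intro h
    exact (xel_rel hm hm2 x y).mp (Quotient.exact h)
  · intro h
    exact Quotient.sound ((xel_rel hm hm2 x y).mpr h)


lemma finRotate_val' {N : ℕ} (hN : 2 ≤ N) (k : Fin N) :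
    ((finRotate N) k).val = (k.val + 1) % N := by
  match N, hN with
  | (M + 2), _ => exact finRotate_val k

lemma addone_mod {a N : ℕ} (hN : 2 ≤ N) : (a % N + 1) % N = (a + 1) % N := by
  conv_rhs => rw [Nat.add_mod a 1 N, Nat.mod_eq_of_lt (show 1 < N by omega)]

/-- Number of blocks of a coarse setoid described by a surjective index map. -/
lemma nb_eq_of_index (n : ℕ) {A : Type*} [Finite A] (s : Setoid A) (f : A → Fin n)
    (hf : ∀ a b, s.r a b ↔ f a = f b) (hsurj : Function.Surjective f) :
    nb s = n := by
  have hresp : ∀ a b, s.r a b → f a = f b := fun a b h => (hf a b).mp h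
  let F : Quotient s → Fin n := Quotient.lift f hresp
  have hbij : Function.Bijective F := by
    constructor
    · intro c d h
      obtain ⟨a, rfl⟩ := Quotient.exists_rep c
      obtain ⟨b, rfl⟩ := Quotient.exists_rep d
      exact Quotient.sound ((hf a b).mpr h)
    · intro k
      obtain ⟨a, ha⟩ := hsurj k
      exact ⟨Quotient.mk s a, ha⟩
  unfold nb
  rw [Nat.card_congr (Equiv.ofBijective F hbij)]
  simp

lemma nb_qB (hn : 2 ≤ n) (hm2 : 2 ≤ m) : nb (qBel n m hm) = n := by
  apply nb_eq_of_index n (qBel n m hm) (Quotient.lift (fun x => x.1)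
    (fun a b h => ((xel_rel hm hm2 a b).mp h).1))
  · intro a b
    obtain ⟨x, rfl⟩ := Quotient.exists_rep a
    obtain ⟨y, rfl⟩ := Quotient.exists_rep b
    exact qB_rel hm hm2 x y
  · intro k
    exact ⟨Quotient.mk _ (k, ⟨0, by omega⟩), rfl⟩

lemma nb_qA (hn : 2 ≤ n) (hm2 : 2 ≤ m) : nb (qAel n m hm) = n := by
  haveI : NeZero n := ⟨by omega⟩
  apply nb_eq_of_index n (qAel n m hm) (Quotient.lift (k1 n m)
    (fun a b h => (gA_rel hm2 a b).mp (xel_le_gA hm hm2 h)))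
  · intro a b
    obtain ⟨x, rfl⟩ := Quotient.exists_rep a
    obtain ⟨y, rfl⟩ := Quotient.exists_rep b
    exact qA_rel hm hm2 x y
  · intro k
    refine ⟨Quotient.mk _ (k, ⟨0, by omega⟩), ?_⟩
    show k1 n m (k, ⟨0, by omega⟩) = k
    rw [k1_eq]
    exact if_neg (by simp; omega)

lemma qB_noSinglet (hn : 2 ≤ n) (hm2 : 2 ≤ m) (u : BX n m hm) :
    ∃ v, v ≠ u ∧ (qBel n m hm).r u v := by
  obtain ⟨x, rfl⟩ := Quotient.exists_rep u
  by_cases hl : m / 2 ≤ (x.2 : ℕ)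
  · refine ⟨Quotient.mk _ (x.1, ⟨0, by omega⟩), ?_, ?_⟩
    · intro h
      have h3 : m / 2 ≤ 0 := ((mkX_eq hm hm2 _ _).mp h).2.mpr hl
      omega
    · exact (qB_rel hm hm2 _ _).mpr rfl
  · refine ⟨Quotient.mk _ (x.1, ⟨m - 1, by omega⟩), ?_, ?_⟩
    · intro h
      have h3 : m / 2 ≤ m - 1 → m / 2 ≤ (x.2 : ℕ) := ((mkX_eq hm hm2 _ _).mp h).2.mp
      have := h3 (by omega)
      omega
    · exact (qB_rel hm hm2 _ _).mpr rfl

lemma k1_val (hn : 2 ≤ n) (x : Fin n × Fin m) :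
    (k1 n m x).val = if m / 2 ≤ (x.2 : ℕ) then ((x.1 : ℕ) + 1) % n else (x.1 : ℕ) := by
  rw [k1_eq]
  by_cases hl : m / 2 ≤ (x.2 : ℕ)
  · rw [if_pos hl, if_pos hl, finRotate_val' hn]
  · rw [if_neg hl, if_neg hl]

lemma qA_noSinglet (hn : 2 ≤ n) (hm2 : 2 ≤ m) (u : BX n m hm) :
    ∃ v, v ≠ u ∧ (qAel n m hm).r u v := by
  haveI : NeZero n := ⟨by omega⟩
  obtain ⟨x, rfl⟩ := Quotient.exists_rep u
  by_cases hl : m / 2 ≤ (x.2 : ℕ)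
  · refine ⟨Quotient.mk _ (finRotate n x.1, ⟨0, by omega⟩), ?_, ?_⟩
    · intro h
      have h3 : m / 2 ≤ 0 := ((mkX_eq hm hm2 _ _).mp h).2.mpr hl
      omega
    · apply (qA_rel hm hm2 _ _).mpr
      apply Fin.ext
      rw [k1_val hn, k1_val hn, if_pos hl]
      show ((x.1 : ℕ) + 1) % n =
        if m / 2 ≤ 0 then (((finRotate n x.1 : Fin n) : ℕ) + 1) % n
          else ((finRotate n x.1 : Fin n) : ℕ)
      rw [if_neg (by omega), finRotate_val' hn]
  · refine ⟨Quotient.mk _ ((finRotate n).symm x.1, ⟨m - 1, by omega⟩), ?_, ?_⟩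
    · intro h
      have h3 : m / 2 ≤ m - 1 → m / 2 ≤ (x.2 : ℕ) := ((mkX_eq hm hm2 _ _).mp h).2.mp
      have := h3 (by omega)
      omega
    · apply (qA_rel hm hm2 _ _).mpr
      apply Fin.ext
      rw [k1_val hn, k1_val hn, if_neg hl]
      show (x.1 : ℕ) =
        if m / 2 ≤ m - 1 then ((((finRotate n).symm x.1 : Fin n) : ℕ) + 1) % n
          else (((finRotate n).symm x.1 : Fin n) : ℕ)
      rw [if_pos (by omega)]
      have h5 := finRotate_val' hn ((finRotate n).symm x.1)
      rw [Equiv.apply_symm_apply] at h5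
      exact h5

/-- The `2n`-periodic cycle through the blocks of `X`. -/
def cyc (hn : 2 ≤ n) (hm2 : 2 ≤ m) (t : ℕ) : BX n m hm :=
  Quotient.mk (orbitSetoid (Xel n m hm))
    (⟨(t / 2) % n, Nat.mod_lt _ (by omega)⟩, if t % 2 = 1 then ⟨m - 1, by omega⟩ else ⟨0, by omega⟩)

lemma mod2n (hn : 2 ≤ n) (t : ℕ) : t % (2 * n) = 2 * ((t / 2) % n) + t % 2 := by
  have ht : 2 * (t / 2) + t % 2 = t := by omega
  have h1 : (2 * (t / 2)) % (2 * n) = 2 * ((t / 2) % n) := Nat.mul_mod_mul_left 2 (t / 2) n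
  have h2 : (t / 2) % n < n := Nat.mod_lt _ (by omega)
  conv_lhs => rw [← ht]
  rw [Nat.add_mod, h1, Nat.mod_eq_of_lt (show t % 2 < 2 * n by omega),
    Nat.mod_eq_of_lt (show 2 * ((t / 2) % n) + t % 2 < 2 * n by omega)]

lemma cyc_eq_iff (hn : 2 ≤ n) (hm2 : 2 ≤ m) (t t' : ℕ) :
    cyc hm hn hm2 t = cyc hm hn hm2 t' ↔ t % (2 * n) = t' % (2 * n) := by
  unfold cyc
  rw [mkX_eq hm hm2]
  have hid := mod2n hn t
  have hid' := mod2n hn t'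
  have hlt : (t / 2) % n < n := Nat.mod_lt _ (by omega)
  have hlt' : (t' / 2) % n < n := Nat.mod_lt _ (by omega)
  rcases Nat.mod_two_eq_zero_or_one t with h | h <;>
    rcases Nat.mod_two_eq_zero_or_one t' with h' | h'
  · rw [if_neg (by omega), if_neg (by omega), Fin.mk.injEq]
    show ((t / 2) % n = (t' / 2) % n ∧ (m / 2 ≤ 0 ↔ m / 2 ≤ 0)) ↔ _
    constructor
    · rintro ⟨h1, -⟩; omega
    · intro h1; exact ⟨by omega, Iff.rfl⟩
  · rw [if_neg (by omega), if_pos h', Fin.mk.injEq]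
    show ((t / 2) % n = (t' / 2) % n ∧ (m / 2 ≤ 0 ↔ m / 2 ≤ m - 1)) ↔ _
    constructor
    · rintro ⟨-, h2⟩
      have : m / 2 ≤ 0 := h2.mpr (by omega)
      omega
    · intro h1; omega
  · rw [if_pos h, if_neg (by omega), Fin.mk.injEq]
    show ((t / 2) % n = (t' / 2) % n ∧ (m / 2 ≤ m - 1 ↔ m / 2 ≤ 0)) ↔ _
    constructor
    · rintro ⟨-, h2⟩
      have : m / 2 ≤ 0 := h2.mp (by omega)
      omega
    · intro h1; omega
  · rw [if_pos h, if_pos h', Fin.mk.injEq]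
    show ((t / 2) % n = (t' / 2) % n ∧ (m / 2 ≤ m - 1 ↔ m / 2 ≤ m - 1)) ↔ _
    constructor
    · rintro ⟨h1, -⟩; omega
    · intro h1; exact ⟨by omega, Iff.rfl⟩

lemma cyc_step (hn : 2 ≤ n) (hm2 : 2 ≤ m) (t : ℕ) :
    (qBel n m hm).r (cyc hm hn hm2 t) (cyc hm hn hm2 (t + 1)) ∨
      (qAel n m hm).r (cyc hm hn hm2 t) (cyc hm hn hm2 (t + 1)) := by
  haveI : NeZero n := ⟨by omega⟩
  rcases Nat.mod_two_eq_zero_or_one t with h | h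
  · left
    unfold cyc
    apply (qB_rel hm hm2 _ _).mpr
    simp only [Fin.mk.injEq]
    rw [show (t + 1) / 2 = t / 2 from by omega]
  · right
    unfold cyc
    apply (qA_rel hm hm2 _ _).mpr
    apply Fin.ext
    rw [k1_val hn, k1_val hn]
    simp only []
    rw [if_pos h, if_neg (show ¬(t + 1) % 2 = 1 by omega)]
    show (if m / 2 ≤ m - 1 then ((t / 2) % n + 1) % n else (t / 2) % n)
        = if m / 2 ≤ 0 then (((t + 1) / 2) % n + 1) % n else ((t + 1) / 2) % n
    rw [if_pos (by omega), if_neg (by omega), addone_mod (by omega : 2 ≤ n),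
      show (t + 1) / 2 = t / 2 + 1 from by omega]

lemma cyc_surj (hn : 2 ≤ n) (hm2 : 2 ≤ m) (u : BX n m hm) :
    ∃ t, t < 2 * n ∧ cyc hm hn hm2 t = u := by
  obtain ⟨x, rfl⟩ := Quotient.exists_rep u
  have hx := x.1.isLt
  by_cases hl : m / 2 ≤ (x.2 : ℕ)
  · refine ⟨2 * (x.1 : ℕ) + 1, by omega, ?_⟩
    unfold cyc
    apply (mkX_eq hm hm2 _ _).mpr
    constructor
    · apply Fin.ext
      show (2 * (x.1 : ℕ) + 1) / 2 % n = (x.1 : ℕ)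
      rw [show (2 * (x.1 : ℕ) + 1) / 2 = (x.1 : ℕ) from by omega]
      exact Nat.mod_eq_of_lt hx
    · rw [if_pos (show (2 * (x.1 : ℕ) + 1) % 2 = 1 from by omega)]
      exact iff_of_true (show m / 2 ≤ m - 1 from by omega) hl
  · refine ⟨2 * (x.1 : ℕ), by omega, ?_⟩
    unfold cyc
    apply (mkX_eq hm hm2 _ _).mpr
    constructor
    · apply Fin.ext
      show (2 * (x.1 : ℕ)) / 2 % n = (x.1 : ℕ)
      rw [show (2 * (x.1 : ℕ)) / 2 = (x.1 : ℕ) from by omega]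
      exact Nat.mod_eq_of_lt hx
    · rw [if_neg (show ¬ (2 * (x.1 : ℕ)) % 2 = 1 from by omega)]
      exact iff_of_false (show ¬ m / 2 ≤ 0 from by omega) hl

lemma chain_full (hn : 2 ≤ n) (hm2 : 2 ≤ m) (d s : ℕ) :
    (qAel n m hm ⊔ qBel n m hm).r (cyc hm hn hm2 s) (cyc hm hn hm2 (s + d)) := by
  induction d with
  | zero => exact (qAel n m hm ⊔ qBel n m hm).refl _
  | succ d ih =>
    refine (qAel n m hm ⊔ qBel n m hm).trans ih ?_
    rcases cyc_step hm hn hm2 (s + d) with h | h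
    · exact Setoid.le_def.mp le_sup_right h
    · exact Setoid.le_def.mp le_sup_left h

lemma conn_full (hn : 2 ≤ n) (hm2 : 2 ≤ m) (u v : BX n m hm) : (qAel n m hm ⊔ qBel n m hm).r u v := by
  obtain ⟨s, _, rfl⟩ := cyc_surj hm hn hm2 u
  obtain ⟨t, _, rfl⟩ := cyc_surj hm hn hm2 v
  rcases le_total s t with h | h
  · have := chain_full hm hn hm2 (t - s) s
    rwa [show s + (t - s) = t by omega] at this
  · have := chain_full hm hn hm2 (s - t) t
    rw [show t + (s - t) = s by omega] at this
    exact (qAel n m hm ⊔ qBel n m hm).symm this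


section Restricted

variable (hn : 2 ≤ n) (hm2 : 2 ≤ m) (u₀ : BX n m hm)

/-- Restriction of the setoids to the complement of `u₀`. -/
abbrev resA : Setoid {w : BX n m hm // w ≠ u₀} := Setoid.comap Subtype.val (qAel n m hm)
abbrev resB : Setoid {w : BX n m hm // w ≠ u₀} := Setoid.comap Subtype.val (qBel n m hm)

lemma chain_avoid (d : ℕ) : ∀ (s : ℕ), (∀ i, i ≤ d → cyc hm hn hm2 s ≠ u₀ →
    cyc hm hn hm2 (s + i) ≠ u₀) →
    ∀ (a b : {w : BX n m hm // w ≠ u₀}), a.val = cyc hm hn hm2 s →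
      b.val = cyc hm hn hm2 (s + d) →
      (resA hm u₀ ⊔ resB hm u₀).r a b := by
  induction d with
  | zero =>
    intro s _ a b ha hb
    have : a = b := Subtype.ext (by rw [ha, hb, Nat.add_zero])
    rw [this]
  | succ d ih =>
    intro s hall a b ha hb
    have hmidne : cyc hm hn hm2 (s + d) ≠ u₀ := by
      apply hall d (by omega)
      rw [← ha]; exact a.prop
    set mid : {w : BX n m hm // w ≠ u₀} := ⟨cyc hm hn hm2 (s + d), hmidne⟩ with hmid
    refine (resA hm u₀ ⊔ resB hm u₀).trans (ih s (fun i hi => hall i (by omega)) a mid ha rfl) ?_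
    have hstep := cyc_step hm hn hm2 (s + d)
    rcases hstep with h | h
    · apply Setoid.le_def.mp le_sup_right
      rw [Setoid.comap_rel]
      show (qBel n m hm).r mid.val b.val
      rw [hb, show s + (d + 1) = s + d + 1 from by omega]
      exact h
    · apply Setoid.le_def.mp le_sup_left
      rw [Setoid.comap_rel]
      show (qAel n m hm).r mid.val b.val
      rw [hb, show s + (d + 1) = s + d + 1 from by omega]
      exact h

include hn hm2 in
lemma conn_avoid (a b : {w : BX n m hm // w ≠ u₀}) :
    (resA hm u₀ ⊔ resB hm u₀).r a b := by
  obtain ⟨t₀, ht₀, hct₀⟩ := cyc_surj hm hn hm2 u₀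
  -- canonical positions in the window (t₀, t₀ + 2n)
  have key : ∀ w : {w : BX n m hm // w ≠ u₀}, ∃ s, t₀ < s ∧ s < t₀ + 2 * n ∧
      cyc hm hn hm2 s = w.val := by
    intro w
    obtain ⟨s₀, hs₀, hcs₀⟩ := cyc_surj hm hn hm2 w.val
    by_cases hle : s₀ ≤ t₀
    · refine ⟨s₀ + 2 * n, by omega, ?_, ?_⟩
      · -- s₀ + 2n < t₀ + 2n unless s₀ = t₀; but s₀ = t₀ would give w = u₀
        have hne : s₀ ≠ t₀ := by
          intro hc
          apply w.prop
          rw [← hcs₀, hc, hct₀]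
        omega
      · rw [← hcs₀]
        apply (cyc_eq_iff hm hn hm2 _ _).mpr
        rw [Nat.add_mod_right]
    · exact ⟨s₀, by omega, by omega, hcs₀⟩
  obtain ⟨S, hS1, hS2, hcS⟩ := key a
  obtain ⟨T, hT1, hT2, hcT⟩ := key b
  have havoid : ∀ r, t₀ < r → r < t₀ + 2 * n → cyc hm hn hm2 r ≠ u₀ := by
    intro r hr1 hr2 hc
    rw [← hct₀] at hc
    have hmod := (cyc_eq_iff hm hn hm2 _ _).mp hc
    rw [Nat.mod_eq_of_lt ht₀] at hmod
    have hdm := Nat.div_add_mod r (2 * n)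
    rw [hmod] at hdm
    rcases Nat.eq_zero_or_pos (r / (2 * n)) with hq | hq
    · rw [hq] at hdm; omega
    · have : 2 * n * 1 ≤ 2 * n * (r / (2 * n)) := Nat.mul_le_mul_left _ hq
      omega
  rcases le_total S T with hST | hST
  · apply chain_avoid hm hn hm2 u₀ (T - S) S
      (fun i hi _ => havoid (S + i) (by omega) (by omega))
      a b hcS.symm (by rw [show S + (T - S) = T from by omega]; exact hcT.symm)
  · apply (resA hm u₀ ⊔ resB hm u₀).symm
    apply chain_avoid hm hn hm2 u₀ (S - T) T
      (fun i hi _ => havoid (T + i) (by omega) (by omega))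
      b a hcT.symm (by rw [show T + (S - T) = S from by omega]; exact hcS.symm)

end Restricted


section Final

variable (hn : 2 ≤ n) (hm2 : 2 ≤ m)

include hn hm2 in
lemma nb_qA_sup_qB : nb (qAel n m hm ⊔ qBel n m hm) = 1 := by
  have h1 : nb (qAel n m hm ⊔ qBel n m hm) ≤ 1 :=
    nb_le_one_of_total (fun u v => conn_full hm hn hm2 u v)
  have h2 : (1 : ℤ) ≤ nb (qAel n m hm ⊔ qBel n m hm) := by
    haveI : Nonempty (BX n m hm) :=
      ⟨Quotient.mk _ (⟨0, by omega⟩, ⟨0, by omega⟩)⟩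
    exact one_le_nb _
  omega

include hn hm2 in
/-- Generic bound: `#(p ⊔ q_A) + #(p ⊔ q_B) ≤ #p + 1`. -/
lemma genBound (p : Setoid (BX n m hm)) :
    nb (p ⊔ qAel n m hm) + nb (p ⊔ qBel n m hm) ≤ nb p + 1 := by
  have hk := nb_key (q := p) (a := p ⊔ qAel n m hm) (b := p ⊔ qBel n m hm)
    le_sup_left le_sup_left
  have htot : nb ((p ⊔ qAel n m hm) ⊔ (p ⊔ qBel n m hm)) ≤ 1 := by
    apply nb_le_one_of_total
    intro u v
    have hle : qAel n m hm ⊔ qBel n m hm ≤ (p ⊔ qAel n m hm) ⊔ (p ⊔ qBel n m hm) :=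
      sup_le_sup le_sup_right le_sup_right
    exact Setoid.le_def.mp hle (conn_full hm hn hm2 u v)
  omega

include hn hm2 in
/-- Singlet bound: if `p` has a singlet then `#(p ⊔ q_A) + #(p ⊔ q_B) ≤ #p`. -/
lemma singBound (p : Setoid (BX n m hm)) {u₀ : BX n m hm} (hs : IsSinglet p u₀) :
    nb (p ⊔ qAel n m hm) + nb (p ⊔ qBel n m hm) ≤ nb p := by
  set rP : Setoid {w : BX n m hm // w ≠ u₀} := Setoid.comap Subtype.val p with hrP
  -- Step 1: surjection bound
  have hsurj : ∀ (s : Setoid (BX n m hm)), (∃ a, a ≠ u₀ ∧ s.r u₀ a) →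
      nb (p ⊔ s) ≤ nb (rP ⊔ Setoid.comap Subtype.val s) := by
    rintro s ⟨a0, ha0, hrel0⟩
    have hle : (rP ⊔ Setoid.comap Subtype.val s) ≤ Setoid.comap Subtype.val (p ⊔ s) := by
      apply sup_le
      · rw [Setoid.le_def]
        intro w w' h
        exact Setoid.le_def.mp (le_sup_left : p ≤ p ⊔ s) h
      · rw [Setoid.le_def]
        intro w w' h
        exact Setoid.le_def.mp (le_sup_right : s ≤ p ⊔ s) h
    have hresp : ∀ w w' : {w : BX n m hm // w ≠ u₀},
        (rP ⊔ Setoid.comap Subtype.val s).r w w' →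
        Quotient.mk (p ⊔ s) w.val = Quotient.mk (p ⊔ s) w'.val :=
      fun w w' h => Quotient.sound (Setoid.le_def.mp hle h)
    have hψ : Function.Surjective
        (Quotient.lift (fun w : {w : BX n m hm // w ≠ u₀} => Quotient.mk (p ⊔ s) w.val)
          hresp) := by
      intro c
      obtain ⟨w, rfl⟩ := Quotient.exists_rep c
      by_cases hw : w = u₀
      · refine ⟨Quotient.mk _ ⟨a0, ha0⟩, ?_⟩
        show Quotient.mk (p ⊔ s) a0 = Quotient.mk (p ⊔ s) w
        apply Quotient.sound
        rw [hw]
        exact (p ⊔ s).symm (Setoid.le_def.mp (le_sup_right : s ≤ p ⊔ s) hrel0)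
      · exact ⟨Quotient.mk _ ⟨w, hw⟩, rfl⟩
    unfold nb
    exact_mod_cast Nat.card_le_card_of_surjective _ hψ
  -- Step 2: removing the singlet block
  have h2 : nb p = nb rP + 1 := by
    have hresp : ∀ w w' : {w : BX n m hm // w ≠ u₀}, rP.r w w' →
        (⟨Quotient.mk p w.val, fun hc => w.prop (hs w.val ((p).symm (Quotient.exact hc)))⟩ :
          {c : Quotient p // c ≠ Quotient.mk p u₀}) =
        ⟨Quotient.mk p w'.val, fun hc => w'.prop (hs w'.val ((p).symm (Quotient.exact hc)))⟩ :=
      fun w w' h => Subtype.ext (Quotient.sound h)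
    have hbij : Function.Bijective (Quotient.lift _ hresp) := by
      constructor
      · intro c d h
        obtain ⟨w, rfl⟩ := Quotient.exists_rep c
        obtain ⟨w', rfl⟩ := Quotient.exists_rep d
        exact Quotient.sound (Quotient.exact (congrArg Subtype.val h) :
          p.r w.val w'.val)
      · rintro ⟨c, hc⟩
        obtain ⟨w, rfl⟩ := Quotient.exists_rep c
        have hw : w ≠ u₀ := fun hww => hc (by rw [hww])
        exact ⟨Quotient.mk _ ⟨w, hw⟩, Subtype.ext rfl⟩
    have he : Nat.card (Quotient rP) = Nat.card {c : Quotient p // c ≠ Quotient.mk p u₀} :=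
      Nat.card_congr (Equiv.ofBijective _ hbij)
    have hsum : Nat.card (Quotient p) = Nat.card {c : Quotient p // c = Quotient.mk p u₀}
        + Nat.card {c : Quotient p // c ≠ Quotient.mk p u₀} := by
      rw [← Nat.card_sum]
      exact (Nat.card_congr (Equiv.sumCompl (· = Quotient.mk p u₀)).symm)
    have hone : Nat.card {c : Quotient p // c = Quotient.mk p u₀} = 1 := by
      have h3 : Subsingleton {c : Quotient p // c = Quotient.mk p u₀} := by
        constructor; rintro ⟨c, rfl⟩ ⟨d, hd⟩; exact Subtype.ext hd.symm
      have h4 : Nonempty {c : Quotient p // c = Quotient.mk p u₀} := ⟨⟨_, rfl⟩⟩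
      exact Nat.card_unique
    unfold nb
    omega
  -- Step 3: restricted connectivity
  have h3 : nb ((rP ⊔ Setoid.comap Subtype.val (qAel n m hm))
      ⊔ (rP ⊔ Setoid.comap Subtype.val (qBel n m hm))) ≤ 1 := by
    apply nb_le_one_of_total
    intro a b
    have hle : resA hm u₀ ⊔ resB hm u₀ ≤ (rP ⊔ Setoid.comap Subtype.val (qAel n m hm))
        ⊔ (rP ⊔ Setoid.comap Subtype.val (qBel n m hm)) :=
      sup_le_sup le_sup_right le_sup_right
    exact Setoid.le_def.mp hle (conn_avoid hm hn hm2 u₀ a b)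
  -- Step 4: key inequality on the complement
  have h4 := nb_key (q := rP) (a := rP ⊔ Setoid.comap Subtype.val (qAel n m hm))
    (b := rP ⊔ Setoid.comap Subtype.val (qBel n m hm)) le_sup_left le_sup_left
  -- combine
  obtain ⟨vA, hvA, hrelA⟩ := qA_noSinglet hm hn hm2 u₀
  obtain ⟨vB, hvB, hrelB⟩ := qB_noSinglet hm hn hm2 u₀
  have hA := hsurj (qAel n m hm) ⟨vA, hvA, hrelA⟩
  have hB := hsurj (qBel n m hm) ⟨vB, hvB, hrelB⟩
  omega

include hn hm2 in
/-- The key distance estimate through a partition with a singlet. -/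
lemma pdist_through_singlet (p : Setoid (BX n m hm)) (hsing : ∃ u, IsSinglet p u) :
    2 * (n : ℤ) ≤ pdist (qAel n m hm) p + pdist p (qBel n m hm) := by
  obtain ⟨u₀, hs⟩ := hsing
  have hSL := singBound hm hn hm2 p hs
  have h1 : pdist (qAel n m hm) p = nb (qAel n m hm) + nb p - 2 * nb (p ⊔ qAel n m hm) := by
    unfold pdist
    rw [sup_comm]
  have h2 : pdist p (qBel n m hm) = nb p + nb (qBel n m hm) - 2 * nb (p ⊔ qBel n m hm) := rfl
  rw [h1, h2, nb_qA hm hn hm2, nb_qB hm hn hm2]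
  omega

end Final

end Struct

end RTN

/-- For any configuration `q : V → P_{2n}` with `q ≡ q_A` on `A` and
`q ≡ q_B` on `B`, and every path `L ∈ 𝒫_{A,B}`:
`Σ_{e={x,y}∈L} d(q(x),q(y)) ≥ 2(n - δ_{b_L,(1,…,1)})`, and the sum is even. -/
theorem path_sum_lower_bound {V : Type*} [Fintype V] (G : SimpleGraph V)
    (w : Sym2 V → ℝ) (hw : ∀ e, 0 ≤ w e) (A B C : Set V) (hbdy : RTN.Bdy A B C)
    {n m : ℕ} (hn : 2 ≤ n) (hm2 : 2 ≤ m) (hm : m % 2 = 0)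
    (q : V → Setoid (RTN.BX n m hm))
    (hA : ∀ v ∈ A, q v = RTN.qAel n m hm) (hB : ∀ v ∈ B, q v = RTN.qBel n m hm) :
    ∀ x ∈ A, ∀ y ∈ B, ∀ L : G.Walk x y,
      RTN.wkSum (RTN.partEZ q) L ≥
        2 * ((n : ℤ) - if ∀ v ∈ L.support, ∀ u, ¬ RTN.IsSinglet (q v) u then 1 else 0) ∧
      2 ∣ RTN.wkSum (RTN.partEZ q) L := by
  intro x hx y hy L
  haveI : DecidableEq V := Classical.decEq V
  have hqx : q x = RTN.qAel n m hm := hA x hx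
  have hqy : q y = RTN.qBel n m hm := hB y hy
  have hnbA : RTN.nb (RTN.qAel n m hm) = n := RTN.nb_qA hm hn hm2
  have hnbB : RTN.nb (RTN.qBel n m hm) = n := RTN.nb_qB hm hn hm2
  constructor
  · by_cases hall : ∀ v ∈ L.support, ∀ u, ¬ RTN.IsSinglet (q v) u
    · rw [if_pos hall]
      have h1 := RTN.wkSum_ge_pdist q L
      rw [hqx, hqy] at h1
      have h2 : RTN.pdist (RTN.qAel n m hm) (RTN.qBel n m hm) = 2 * (n : ℤ) - 2 := by
        unfold RTN.pdist
        rw [hnbA, hnbB, RTN.nb_qA_sup_qB hm hn hm2]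
        ring
      rw [h2] at h1
      linarith
    · rw [if_neg hall]
      push_neg at hall
      obtain ⟨v, hv, u, hu⟩ := hall
      rw [RTN.wkSum_split (RTN.partEZ q) L hv]
      have h1 := RTN.wkSum_ge_pdist q (L.takeUntil v hv)
      have h2 := RTN.wkSum_ge_pdist q (L.dropUntil v hv)
      rw [hqx] at h1
      rw [hqy] at h2
      have h3 := RTN.pdist_through_singlet hm hn hm2 (q v) ⟨u, hu⟩
      linarith
  · have hp := RTN.wkSum_parity q L
    rw [hqx, hqy, hnbA, hnbB] at hp
    omega
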